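/- Let K be a symmetric invertible n×n real matrix (n ≥ 2) all of whose entries are nonzero, let λ > 0, and let R be an invertible n×n matrix. Suppose that for every diagonal matrix D with diagonal entries ranging over a nonempty open subset S of ℝ (each entry independently), the matrix M = (1/n)·R·D·K + λ·R is symmetric. If S contains at least two points, then there exists a constant c ∈ ℝ such that R = c·K. -/
import Mathlib


open Matrix

theorem stmt_19 {n : ℕ} (hn : 2 ≤ n) (K R : Matrix (Fin n) (Fin n) ℝ)
    (hKsym : K.IsHermitian) (hKinv : IsUnit K.det)
    (hKne : ∀ i j, K i j ≠ 0)
    (lam : ℝ) (hlam : 0 < lam)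
    (hRinv : IsUnit R.det)
    (S : Set ℝ) (hSopen : IsOpen S) (hSne : S.Nonempty)
    (hsym : ∀ s : Fin n → ℝ, (∀ i, s i ∈ S) →
      ((n : ℝ)⁻¹ • (R * Matrix.diagonal s * K) + lam • R).IsHermitian)
    (hS2 : ∃ a b : ℝ, a ∈ S ∧ b ∈ S ∧ a ≠ b) :
    ∃ c : ℝ, R = c • K := by
  obtain ⟨a, b, ha, hb, hab⟩ := hS2
  have hn0 : (n : ℝ) ≠ 0 := by positivity
  have hni : ((n : ℝ)⁻¹) ≠ 0 := inv_ne_zero hn0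
  have hKs : ∀ i j, K i j = K j i := by
    intro i j
    have := hKsym.apply j i
    simpa using this
  -- entrywise symmetry equation
  have E : ∀ s : Fin n → ℝ, (∀ i, s i ∈ S) → ∀ j k,
      (n : ℝ)⁻¹ * (∑ m, R j m * s m * K m k) + lam * R j k
      = (n : ℝ)⁻¹ * (∑ m, R k m * s m * K m j) + lam * R k j := by
    intro s hs j k
    have h := (hsym s hs).apply k j
    simpa [Matrix.mul_apply, Matrix.diagonal_apply, mul_ite, mul_zero, ite_mul, zero_mul,
      Finset.sum_ite_eq, Finset.sum_ite_eq'] using h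
  have hPconst : ∀ (t : ℝ) (j k : Fin n),
      (∑ m, R j m * t * K m k) = t * ∑ m, R j m * K m k := by
    intro t j k
    rw [Finset.mul_sum]
    exact Finset.sum_congr rfl fun m _ => by ring
  -- R K is symmetric, hence R is symmetric
  have hRsym : ∀ j k, R j k = R k j := by
    intro j k
    have h1 := E (fun _ => a) (fun _ => ha) j k
    have h2 := E (fun _ => b) (fun _ => hb) j k
    rw [hPconst, hPconst] at h1 h2
    set P := ∑ m, R j m * K m k with hP
    set Q := ∑ m, R k m * K m j with hQ
    have hPQ : P = Q := by
      have h3 : (n : ℝ)⁻¹ * (a - b) * P = (n : ℝ)⁻¹ * (a - b) * Q := by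
        linear_combination h1 - h2
      exact mul_left_cancel₀ (mul_ne_zero hni (sub_ne_zero.mpr hab)) h3
    rw [hPQ] at h1
    have : lam * R j k = lam * R k j := by linarith
    exact mul_left_cancel₀ (ne_of_gt hlam) this
  -- key relation from single-coordinate perturbations
  have key : ∀ i j k, R j i * K i k = R k i * K i j := by
    intro i j k
    have hu : ∀ m, (Function.update (fun _ => a) i b) m ∈ S := by
      intro m
      rcases eq_or_ne m i with rfl | h
      · simp [hb]
      · simp [Function.update, h, ha]
    have h1 := E (fun _ => a) (fun _ => ha) j k
    have h2 := E (Function.update (fun _ => a) i b) hu j k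
    have hsum : ∀ (p q : Fin n),
        (∑ m, R p m * (Function.update (fun _ => a) i b) m * K m q)
        = (∑ m, R p m * a * K m q) + R p i * (b - a) * K i q := by
      intro p q
      have : ∀ m ∈ Finset.univ, R p m * (Function.update (fun _ => a) i b) m * K m q
          = R p m * a * K m q + (if m = i then R p i * (b - a) * K i q else 0) := by
        intro m _
        rcases eq_or_ne m i with rfl | h
        · simp [Function.update]; ring
        · simp [Function.update, h]
      rw [Finset.sum_congr rfl this, Finset.sum_add_distrib, Finset.sum_ite_eq' Finset.univ i]
      simp
    rw [hsum, hsum] at h2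
    have h3 : (n : ℝ)⁻¹ * ((b - a) * (R j i * K i k))
        = (n : ℝ)⁻¹ * ((b - a) * (R k i * K i j)) := by linear_combination h2 - h1
    exact mul_left_cancel₀ (sub_ne_zero.mpr (Ne.symm hab))
      (mul_left_cancel₀ hni h3)
  -- columns of R proportional to columns of K
  have hcol : ∀ i j, R j i = (R i i / K i i) * K i j := by
    intro i j
    have h := key i j i
    rw [div_mul_eq_mul_div, eq_div_iff (hKne i i)]
    linear_combination h
  have hceq : ∀ i j, R i i / K i i = R j j / K j j := by
    intro i j
    have h1 : R j i = (R i i / K i i) * K i j := hcol i j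
    have h2 : R i j = (R j j / K j j) * K j i := hcol j i
    have h3 : R j i = R i j := hRsym j i
    rw [h1, h2, hKs j i] at h3
    exact mul_right_cancel₀ (hKne i j) h3
  have i0 : Fin n := ⟨0, by omega⟩
  refine ⟨R i0 i0 / K i0 i0, ?_⟩
  ext j i
  rw [Matrix.smul_apply, smul_eq_mul, hceq i0 i, ← hKs i j, ← hcol i j]
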